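/- Let E be a finite-dimensional real inner product space with decomposition E = T ⊕ N, projector P onto T along N, P⊥ = Id − P, and G = P* G_T P + (P⊥)* G_N P⊥ as above (G_T, G_N symmetric, positive definite on T and N respectively). Define G̃_T := P* G_T P regarded as a map T → N^{⊥} and G̃_N := (P⊥)* G_N P⊥ regarded as a map N → T^{⊥}, where ⊥ denotes Euclidean orthogonal complement. Then G̃_T and G̃_N are bijective, and G⁻¹ = P ∘ G̃_T⁻¹ ∘ P* + P⊥ ∘ G̃_N⁻¹ ∘ (P⊥)*. -/

import Mathlib

open LinearMap in
theorem metric_aux {E : Type*}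
    [NormedAddCommGroup E] [InnerProductSpace ℝ E] [FiniteDimensional ℝ E]
    (T N : Submodule ℝ E) (hTN : IsCompl T N)
    (R : E →ₗ[ℝ] E) (hRR : R ∘ₗ R = R)
    (hrange : LinearMap.range R = T) (hker : LinearMap.ker R = N)
    (G : E →ₗ[ℝ] E)
    (hpos : ∀ ξ ∈ T, ξ ≠ 0 → 0 < (inner ℝ (G ξ) ξ : ℝ)) :
    (∀ ξ ∈ T, (LinearMap.adjoint R ∘ₗ G ∘ₗ R) ξ ∈ Nᗮ) ∧
    (∀ y ∈ Nᗮ, ∃! ξ : E, ξ ∈ T ∧ (LinearMap.adjoint R ∘ₗ G ∘ₗ R) ξ = y) := by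
  set G' : E →ₗ[ℝ] E := LinearMap.adjoint R ∘ₗ G ∘ₗ R with hG'
  have hRfix : ∀ ξ ∈ T, R ξ = ξ := by
    intro ξ hξ
    rw [← hrange] at hξ
    obtain ⟨x, rfl⟩ := hξ
    have := LinearMap.congr_fun hRR x
    simpa using this
  have hRzero : ∀ n ∈ N, R n = 0 := by
    intro n hn; rw [← hker] at hn; exact hn
  have hmem : ∀ ξ ∈ T, G' ξ ∈ Nᗮ := by
    intro ξ hξ
    rw [Submodule.mem_orthogonal]
    intro n hn
    rw [real_inner_comm]
    simp only [hG', LinearMap.comp_apply, LinearMap.adjoint_inner_left, hRzero n hn,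
      inner_zero_right]
  have hinj : ∀ ξ ∈ T, G' ξ = 0 → ξ = 0 := by
    intro ξ hξ h0
    by_contra hne
    have hp := hpos ξ hξ hne
    have : (inner ℝ (G' ξ) ξ : ℝ) = inner ℝ (G ξ) ξ := by
      simp only [hG', LinearMap.comp_apply, LinearMap.adjoint_inner_left, hRfix ξ hξ]
    rw [h0, inner_zero_left] at this
    linarith
  -- the restricted map T → Nᗮ
  let f : T →ₗ[ℝ] Nᗮ := LinearMap.codRestrict Nᗮ (G' ∘ₗ T.subtype)
    (fun x => hmem x.1 x.2)
  have hfinj : Function.Injective f := by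
    rw [injective_iff_map_eq_zero]
    intro x hx
    have : G' x.1 = 0 := by
      have := congrArg Subtype.val hx
      exact this
    exact Subtype.ext (hinj x.1 x.2 this)
  have hdim : Module.finrank ℝ T = Module.finrank ℝ Nᗮ := by
    have h1 := Submodule.finrank_add_eq_of_isCompl hTN
    have h2 := Submodule.finrank_add_finrank_orthogonal (K := N)
    omega
  have hfsurj : Function.Surjective f :=
    (LinearMap.injective_iff_surjective_of_finrank_eq_finrank hdim).mp hfinj
  refine ⟨hmem, fun y hy => ?_⟩
  obtain ⟨x, hx⟩ := hfsurj ⟨y, hy⟩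
  have hx' : G' x.1 = y := by
    have := congrArg Subtype.val hx
    exact this
  refine ⟨x.1, ⟨x.2, hx'⟩, ?_⟩
  rintro ξ ⟨hξT, hξy⟩
  have hsub : G' (ξ - x.1) = 0 := by rw [map_sub, hξy, hx', sub_self]
  have := hinj _ (T.sub_mem hξT x.2) hsub
  exact sub_eq_zero.mp this

/-- With `E = T ⊕ N`, projector `P` onto `T` along `N`, `P⊥ = Id − P`, and
`G = P* G_T P + (P⊥)* G_N P⊥`, the operators `G̃_T := P* G_T P : T → N^⊥` and
`G̃_N := (P⊥)* G_N P⊥ : N → T^⊥` are bijective, and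
`G⁻¹ = P ∘ G̃_T⁻¹ ∘ P* + P⊥ ∘ G̃_N⁻¹ ∘ (P⊥)*`, expressed as: whenever `ξ ∈ T` and
`ν ∈ N` satisfy `G̃_T ξ = P* z` and `G̃_N ν = (P⊥)* z`, then `G(ξ + ν) = z`. -/
theorem metric_inverse_formula {E : Type*}
    [NormedAddCommGroup E] [InnerProductSpace ℝ E] [FiniteDimensional ℝ E]
    (T N : Submodule ℝ E) (hTN : IsCompl T N)
    (P : E →ₗ[ℝ] E) (hPP : P ∘ₗ P = P)
    (hrange : LinearMap.range P = T) (hker : LinearMap.ker P = N)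
    (GT GN : E →ₗ[ℝ] E)
    (hGTsym : ∀ ξ ζ : E, (inner ℝ (GT ξ) ζ : ℝ) = inner ℝ ξ (GT ζ))
    (hGNsym : ∀ ξ ζ : E, (inner ℝ (GN ξ) ζ : ℝ) = inner ℝ ξ (GN ζ))
    (hGTpos : ∀ ξ ∈ T, ξ ≠ 0 → 0 < (inner ℝ (GT ξ) ξ : ℝ))
    (hGNpos : ∀ ξ ∈ N, ξ ≠ 0 → 0 < (inner ℝ (GN ξ) ξ : ℝ)) :
    let Q : E →ₗ[ℝ] E := LinearMap.id - P
    let GT' : E →ₗ[ℝ] E := LinearMap.adjoint P ∘ₗ GT ∘ₗ P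
    let GN' : E →ₗ[ℝ] E := LinearMap.adjoint Q ∘ₗ GN ∘ₗ Q
    (∀ ξ ∈ T, GT' ξ ∈ Nᗮ) ∧
    (∀ y ∈ Nᗮ, ∃! ξ : E, ξ ∈ T ∧ GT' ξ = y) ∧
    (∀ ν ∈ N, GN' ν ∈ Tᗮ) ∧
    (∀ y ∈ Tᗮ, ∃! ν : E, ν ∈ N ∧ GN' ν = y) ∧
    (∀ z ξ ν : E, ξ ∈ T → ν ∈ N →
      GT' ξ = LinearMap.adjoint P z → GN' ν = LinearMap.adjoint Q z →
      (GT' + GN') (ξ + ν) = z) := by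
  intro Q GT' GN'
  have hPfix : ∀ ξ ∈ T, P ξ = ξ := by
    intro ξ hξ
    rw [← hrange] at hξ
    obtain ⟨x, rfl⟩ := hξ
    simpa using LinearMap.congr_fun hPP x
  have hPzero : ∀ n ∈ N, P n = 0 := by
    intro n hn; rw [← hker] at hn; exact hn
  have hPPx : ∀ x, P (P x) = P x := by
    intro x
    have := LinearMap.congr_fun hPP x
    simpa using this
  have hQQ : Q ∘ₗ Q = Q := by
    ext x
    simp [Q, map_sub, hPPx x]
  have hQrange : LinearMap.range Q = N := by
    ext x
    constructor
    · rintro ⟨y, rfl⟩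
      rw [← hker]
      simp [Q, map_sub, hPPx y]
    · intro hx
      exact ⟨x, by simp [Q, hPzero x hx]⟩
  have hQker : LinearMap.ker Q = T := by
    ext x
    constructor
    · intro hx
      have : x - P x = 0 := hx
      have hx' : x = P x := by
        have := sub_eq_zero.mp this
        exact this
      rw [hx', ← hrange]
      exact ⟨x, rfl⟩
    · intro hx
      show x - P x = 0
      rw [hPfix x hx, sub_self]
  obtain ⟨h1, h2⟩ := metric_aux T N hTN P hPP hrange hker GT hGTpos
  obtain ⟨h3, h4⟩ := metric_aux N T hTN.symm Q hQQ hQrange hQker GN hGNpos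
  refine ⟨h1, h2, h3, h4, ?_⟩
  intro z ξ ν hξ hν e1 e2
  have hGT'ν : GT' ν = 0 := by
    simp [GT', hPzero ν hν]
  have hGN'ξ : GN' ξ = 0 := by
    have : Q ξ = 0 := by show ξ - P ξ = 0; rw [hPfix ξ hξ, sub_self]
    simp [GN', this]
  have hsum : (GT' + GN') (ξ + ν) = LinearMap.adjoint P z + LinearMap.adjoint Q z := by
    simp only [LinearMap.add_apply, map_add, hGT'ν, hGN'ξ, e1, e2]
    abel
  rw [hsum]
  have hadd : LinearMap.adjoint P + LinearMap.adjoint Q = LinearMap.adjoint (P + Q) :=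
    (map_add (LinearMap.adjoint (E := E) (F := E)) P Q).symm
  have hPQ : P + Q = LinearMap.id := by simp [Q]
  have hidadj : LinearMap.adjoint (LinearMap.id : E →ₗ[ℝ] E) = LinearMap.id := by
    ext x
    exact ext_inner_right ℝ fun y => by simp [LinearMap.adjoint_inner_left]
  calc LinearMap.adjoint P z + LinearMap.adjoint Q z
      = (LinearMap.adjoint P + LinearMap.adjoint Q) z := rfl
    _ = LinearMap.adjoint (P + Q) z := by rw [hadd]
    _ = z := by rw [hPQ, hidadj]; rfl
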